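/- (Schur's Pfaffian identity, even case) For variables s_1, ..., s_{2N} with all s_i + s_j invertible, the Pfaffian of the skew-symmetric matrix with (i,j)-entry (s_i - s_j)/(s_i + s_j) equals ∏_{1 ≤ i < j ≤ 2N} (s_i - s_j)/(s_i + s_j). -/

import Mathlib

open Matrix

/-- Pfaffian of an `n × n` matrix, defined recursively by Laplace-type expansion
along the first row (it agrees with the signed sum over perfect matchings;
it is `0` for odd `n` and `1` for `n = 0`). -/
def pf {R : Type*} [CommRing R] : (n : ℕ) → Matrix (Fin n) (Fin n) R → R
  | 0, _ => 1
  | 1, _ => 0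
  | n + 2, M => ∑ j : Fin (n + 1), (-1 : R) ^ (j : ℕ) * M 0 j.succ *
      pf n ((M.submatrix Fin.succ Fin.succ).submatrix j.succAbove j.succAbove)


open Finset Polynomial


section Helpers
variable {M : Type*} [CommMonoid M] {n : ℕ}

lemma prod_succAbove_eq_prod_erase (g : Fin (n+1) → M) (j : Fin (n+1)) :
    ∏ i : Fin n, g (j.succAbove i) = ∏ i ∈ Finset.univ.erase j, g i := by
  refine Finset.prod_bij (fun i _ => j.succAbove i) ?_ ?_ ?_ ?_
  · intro a _; exact Finset.mem_erase.mpr ⟨Fin.succAbove_ne j a, Finset.mem_univ _⟩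
  · intro a _ b _ h; exact Fin.succAbove_right_injective h
  · intro b hb
    obtain ⟨i, hi⟩ := Fin.exists_succAbove_eq (Finset.mem_erase.mp hb).1
    exact ⟨i, Finset.mem_univ i, hi⟩
  · intros; rfl

lemma prod_erase_succ (g : Fin (n+1) → M) (j : Fin n) :
    ∏ i ∈ Finset.univ.erase j.succ, g i = g 0 * ∏ i ∈ Finset.univ.erase j, g i.succ := by
  have h : (Finset.univ.erase j.succ : Finset (Fin (n+1)))
      = insert 0 ((Finset.univ.erase j).image Fin.succ) := by
    ext k
    simp only [Finset.mem_erase, Finset.mem_univ, and_true, Finset.mem_insert,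
      Finset.mem_image]
    constructor
    · intro hk
      rcases Fin.eq_zero_or_eq_succ k with h0 | ⟨i, rfl⟩
      · exact Or.inl h0
      · exact Or.inr ⟨i, fun hij => hk (by rw [hij]), rfl⟩
    · rintro (rfl | ⟨i, hij, rfl⟩)
      · exact (Fin.succ_ne_zero j).symm
      · exact fun h => hij (Fin.succ_injective _ h)
  rw [h, Finset.prod_insert, Finset.prod_image]
  · intro a _ b _ hab; exact Fin.succ_injective _ hab
  · simp only [Finset.mem_image, not_exists]
    intro i hmem
    exact Fin.succ_ne_zero i hmem.2

end Helpers

section Lagrange1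

lemma coeff_eq_sum_nodalWeight {F : Type*} [Field F] {ι : Type*} [DecidableEq ι]
    (s : Finset ι) (v : ι → F) (hvs : Set.InjOn v s) (p : F[X]) (hp : p.degree < s.card) :
    p.coeff (s.card - 1) = ∑ i ∈ s, Lagrange.nodalWeight s v i * p.eval (v i) := by
  conv_lhs => rw [Lagrange.eq_interpolate hvs hp]
  rw [Lagrange.interpolate_apply, Polynomial.finset_sum_coeff]
  refine Finset.sum_congr rfl fun i hi => ?_
  rw [Polynomial.coeff_C_mul, Lagrange.basis_eq_prod_sub_inv_mul_nodal_div hi,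
    ← Lagrange.nodal_erase_eq_nodal_div hi, Polynomial.coeff_C_mul]
  have h1 : (Lagrange.nodal (s.erase i) v).natDegree = s.card - 1 := by
    rw [Lagrange.natDegree_nodal, Finset.card_erase_of_mem hi]
  rw [← h1, Lagrange.nodal_monic.coeff_natDegree]
  ring

end Lagrange1

section KeyIdentities

variable {F : Type*} [Field F]

lemma sum_prod_ratio_eq_one {m : ℕ} (hm : Odd m)
    (x : Fin m → F) (hsum : ∀ i j, x i + x j ≠ 0) (hinj : Function.Injective x) :
    ∑ j : Fin m, ∏ i ∈ Finset.univ.erase j, ((x j + x i) * (x j - x i)⁻¹) = 1 := by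
  have hm' : 0 < m := hm.pos
  have hx0 : ∀ i, x i ≠ 0 := fun i h => hsum i i (by rw [h, add_zero])
  have h2 : (2 : F) ≠ 0 := by
    intro h
    exact hsum ⟨0, hm'⟩ ⟨0, hm'⟩ (by rw [← two_mul, h, zero_mul])
  set v : Fin (m+1) → F := Fin.cons 0 x with hv
  have hvinj : Function.Injective v := by
    intro a b hab
    induction a using Fin.cases with
    | zero =>
      induction b using Fin.cases with
      | zero => rfl
      | succ i => exact absurd hab.symm (by simpa [hv] using hx0 i)
    | succ i =>
      induction b using Fin.cases with
      | zero => exact absurd hab (by simpa [hv] using hx0 i)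
      | succ k => simpa [hv] using congrArg Fin.succ (hinj (by simpa [hv] using hab))
  set p : F[X] := ∏ i : Fin m, (X + C (x i)) with hp
  have hpm : p.Monic := monic_prod_of_monic _ _ fun i _ => monic_X_add_C _
  have hdeg : p.natDegree = m := by
    rw [hp, Polynomial.natDegree_prod _ _ fun i _ => (monic_X_add_C (x i)).ne_zero]
    simp [Polynomial.natDegree_X_add_C]
  have hcard : (Finset.univ : Finset (Fin (m+1))).card = m + 1 := by simp
  have hdlt : p.degree < ((Finset.univ : Finset (Fin (m+1))).card : ℕ) := by
    rw [Polynomial.degree_eq_natDegree hpm.ne_zero, hdeg, hcard]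
    exact_mod_cast Nat.lt_succ_self m
  have key := coeff_eq_sum_nodalWeight Finset.univ v hvinj.injOn p hdlt
  have hc : p.coeff m = 1 := by rw [← hdeg]; exact hpm.coeff_natDegree
  rw [hcard, Nat.add_sub_cancel, hc, Fin.sum_univ_succ] at key
  have hterm0 : Lagrange.nodalWeight Finset.univ v 0 * p.eval (v 0) = -1 := by
    rw [Lagrange.nodalWeight, ← prod_succAbove_eq_prod_erase (fun l => (v 0 - v l)⁻¹) 0,
      hp, Polynomial.eval_prod, ← Finset.prod_mul_distrib]
    have h1 : ∀ i : Fin m, (v 0 - v ((0 : Fin (m+1)).succAbove i))⁻¹ *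
        Polynomial.eval (v 0) (X + C (x i)) = -1 := by
      intro i
      simp only [Fin.succAbove_zero, hv, Fin.cons_zero, Fin.cons_succ, Polynomial.eval_add,
        Polynomial.eval_X, Polynomial.eval_C, zero_sub, zero_add]
      rw [inv_neg, neg_mul, inv_mul_cancel₀ (hx0 i)]
    rw [Finset.prod_congr rfl fun i _ => h1 i, Finset.prod_const]
    simp [Finset.card_univ, hm.neg_one_pow]
  have htermsucc : ∀ j : Fin m, Lagrange.nodalWeight Finset.univ v j.succ * p.eval (v j.succ)
      = 2 * ∏ i ∈ Finset.univ.erase j, ((x j + x i) * (x j - x i)⁻¹) := by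
    intro j
    rw [Lagrange.nodalWeight, prod_erase_succ (fun l => (v j.succ - v l)⁻¹) j,
      hp, Polynomial.eval_prod]
    simp only [hv, Fin.cons_zero, Fin.cons_succ, sub_zero, Polynomial.eval_add,
      Polynomial.eval_X, Polynomial.eval_C]
    rw [← Finset.mul_prod_erase Finset.univ (fun i => x j + x i) (Finset.mem_univ j),
      Finset.prod_mul_distrib]
    have : (x j)⁻¹ * (∏ i ∈ Finset.univ.erase j, (x j - x i)⁻¹) *
        ((x j + x j) * ∏ i ∈ Finset.univ.erase j, (x j + x i))
        = 2 * ((x j)⁻¹ * x j) *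
          ((∏ i ∈ Finset.univ.erase j, (x j + x i)) *
            ∏ i ∈ Finset.univ.erase j, (x j - x i)⁻¹) := by ring
    rw [this, inv_mul_cancel₀ (hx0 j), mul_one]
  rw [hterm0, Finset.sum_congr rfl (fun j _ => htermsucc j), ← Finset.mul_sum] at key
  have h2S : (2 : F) * (∑ j : Fin m, ∏ i ∈ Finset.univ.erase j,
      ((x j + x i) * (x j - x i)⁻¹)) = 2 * 1 := by linear_combination -key
  exact mul_left_cancel₀ h2 h2S

end KeyIdentities

section StarIdentity

variable {F : Type*} [Field F]

lemma star_identity {m : ℕ} (hm : Odd m) (x : Fin m → F) (z : F)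
    (hsum : ∀ i j, x i + x j ≠ 0) (hz : ∀ i, z + x i ≠ 0) (hinj : Function.Injective x) :
    ∑ j : Fin m, ((z - x j) * (z + x j)⁻¹ *
        ∏ i ∈ Finset.univ.erase j, ((x j + x i) * (x j - x i)⁻¹))
      = ∏ j : Fin m, ((z - x j) * (z + x j)⁻¹) := by
  have hm' : 0 < m := hm.pos
  have hx0 : ∀ i, x i ≠ 0 := fun i h => hsum i i (by rw [h, add_zero])
  set v : Fin (m+1) → F := Fin.cons z (fun i => - x i) with hv
  have hvinj : Function.Injective v := by
    intro a b hab
    induction a using Fin.cases with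
    | zero =>
      induction b using Fin.cases with
      | zero => rfl
      | succ i =>
        exfalso; apply hz i
        have : v 0 = - x i := by rw [hab]; simp [hv]
        simp only [hv, Fin.cons_zero] at this
        rw [this]; ring
    | succ i =>
      induction b using Fin.cases with
      | zero =>
        exfalso; apply hz i
        have : v 0 = - x i := by rw [← hab]; simp [hv]
        simp only [hv, Fin.cons_zero] at this
        rw [this]; ring
      | succ k =>
        have : - x i = - x k := by simpa [hv] using hab
        exact congrArg Fin.succ (hinj (neg_injective this))
  set p : F[X] := ∏ i : Fin m, (X - C (x i)) with hp
  have hpm : p.Monic := monic_prod_of_monic _ _ fun i _ => monic_X_sub_C _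
  have hdeg : p.natDegree = m := by
    rw [hp, Polynomial.natDegree_prod _ _ fun i _ => (monic_X_sub_C (x i)).ne_zero]
    simp [Polynomial.natDegree_X_sub_C]
  have hcard : (Finset.univ : Finset (Fin (m+1))).card = m + 1 := by simp
  have hdlt : p.degree < ((Finset.univ : Finset (Fin (m+1))).card : ℕ) := by
    rw [Polynomial.degree_eq_natDegree hpm.ne_zero, hdeg, hcard]
    exact_mod_cast Nat.lt_succ_self m
  have key := coeff_eq_sum_nodalWeight Finset.univ v hvinj.injOn p hdlt
  have hc : p.coeff m = 1 := by rw [← hdeg]; exact hpm.coeff_natDegree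
  rw [hcard, Nat.add_sub_cancel, hc, Fin.sum_univ_succ] at key
  have hterm0 : Lagrange.nodalWeight Finset.univ v 0 * p.eval (v 0)
      = ∏ j : Fin m, ((z - x j) * (z + x j)⁻¹) := by
    rw [Lagrange.nodalWeight, ← prod_succAbove_eq_prod_erase (fun l => (v 0 - v l)⁻¹) 0,
      hp, Polynomial.eval_prod, ← Finset.prod_mul_distrib]
    refine Finset.prod_congr rfl fun i _ => ?_
    simp only [Fin.succAbove_zero, hv, Fin.cons_zero, Fin.cons_succ, Polynomial.eval_sub,
      Polynomial.eval_X, Polynomial.eval_C, sub_neg_eq_add]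
    ring
  have htermsucc : ∀ j : Fin m, Lagrange.nodalWeight Finset.univ v j.succ * p.eval (v j.succ)
      = 2 * x j * (z + x j)⁻¹ *
          ∏ i ∈ Finset.univ.erase j, ((x j + x i) * (x j - x i)⁻¹) := by
    intro j
    rw [Lagrange.nodalWeight, prod_erase_succ (fun l => (v j.succ - v l)⁻¹) j,
      hp, Polynomial.eval_prod]
    simp only [hv, Fin.cons_zero, Fin.cons_succ, Polynomial.eval_sub,
      Polynomial.eval_X, Polynomial.eval_C]
    rw [← Finset.mul_prod_erase Finset.univ (fun i => - x j - x i) (Finset.mem_univ j)]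
    have hpair : (∏ i ∈ Finset.univ.erase j, (- x j - - x i)⁻¹) *
        (∏ i ∈ Finset.univ.erase j, (- x j - x i))
        = ∏ i ∈ Finset.univ.erase j, ((x j + x i) * (x j - x i)⁻¹) := by
      rw [← Finset.prod_mul_distrib]
      refine Finset.prod_congr rfl fun i _ => ?_
      have h1 : - x j - - x i = -(x j - x i) := by ring
      have h2 : - x j - x i = -(x j + x i) := by ring
      rw [h1, h2, inv_neg, neg_mul_neg, mul_comm]
    have hsc : (- x j - z)⁻¹ * (- x j - x j) = 2 * x j * (z + x j)⁻¹ := by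
      have h1 : - x j - z = -(z + x j) := by ring
      have h2 : - x j - x j = -(2 * x j) := by ring
      rw [h1, h2, inv_neg, neg_mul_neg, mul_comm]
    calc (- x j - z)⁻¹ * (∏ i ∈ Finset.univ.erase j, (- x j - - x i)⁻¹) *
          ((- x j - x j) * ∏ i ∈ Finset.univ.erase j, (- x j - x i))
        = ((- x j - z)⁻¹ * (- x j - x j)) *
          ((∏ i ∈ Finset.univ.erase j, (- x j - - x i)⁻¹) *
            ∏ i ∈ Finset.univ.erase j, (- x j - x i)) := by ring
      _ = 2 * x j * (z + x j)⁻¹ *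
          ∏ i ∈ Finset.univ.erase j, ((x j + x i) * (x j - x i)⁻¹) := by rw [hpair, hsc]
  rw [hterm0, Finset.sum_congr rfl (fun j _ => htermsucc j)] at key
  have hA := sum_prod_ratio_eq_one hm x hsum hinj
  have hratio : ∀ j, (z - x j) * (z + x j)⁻¹ = 1 - 2 * x j * (z + x j)⁻¹ := by
    intro j
    have h := mul_inv_cancel₀ (hz j)
    linear_combination h
  calc ∑ j : Fin m, ((z - x j) * (z + x j)⁻¹ *
        ∏ i ∈ Finset.univ.erase j, ((x j + x i) * (x j - x i)⁻¹))
      = ∑ j : Fin m, ((∏ i ∈ Finset.univ.erase j, ((x j + x i) * (x j - x i)⁻¹))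
          - 2 * x j * (z + x j)⁻¹ *
            ∏ i ∈ Finset.univ.erase j, ((x j + x i) * (x j - x i)⁻¹)) := by
        refine Finset.sum_congr rfl fun j _ => ?_
        rw [hratio j, sub_mul, one_mul]
    _ = 1 - ∑ j : Fin m, (2 * x j * (z + x j)⁻¹ *
          ∏ i ∈ Finset.univ.erase j, ((x j + x i) * (x j - x i)⁻¹)) := by
        rw [Finset.sum_sub_distrib, hA]
    _ = ∏ j : Fin m, ((z - x j) * (z + x j)⁻¹) := by linear_combination key

end StarIdentity

section DoubleProd

variable {M : Type*} [CommMonoid M] {n : ℕ}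

lemma double_prod_split_zero (h : Fin (n+1) → Fin (n+1) → M) :
    (∏ i : Fin (n+1), ∏ k : Fin (n+1), if i < k then h i k else 1)
      = (∏ k : Fin n, h 0 k.succ) *
        ∏ i : Fin n, ∏ k : Fin n, if i < k then h i.succ k.succ else 1 := by
  rw [Fin.prod_univ_succ]
  congr 1
  · rw [Fin.prod_univ_succ]
    simp [Fin.succ_pos]
  · refine Finset.prod_congr rfl fun i _ => ?_
    rw [Fin.prod_univ_succ]
    simp [Fin.succ_lt_succ_iff]

lemma double_prod_succAbove (h : Fin (n+1) → Fin (n+1) → M) (j : Fin (n+1)) :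
    (∏ i : Fin (n+1), ∏ k : Fin (n+1), if i < k then h i k else 1)
      = (∏ i : Fin n, (if j.succAbove i < j then h (j.succAbove i) j else h j (j.succAbove i))) *
        ∏ i : Fin n, ∏ k : Fin n, if i < k then h (j.succAbove i) (j.succAbove k) else 1 := by
  rw [Fin.prod_univ_succAbove _ j]
  have hinner : ∀ i : Fin (n+1), (∏ k : Fin (n+1), if i < k then h i k else 1)
      = (if i < j then h i j else 1) * ∏ k : Fin n, if i < j.succAbove k then h i (j.succAbove k) else 1 := by
    intro i
    rw [Fin.prod_univ_succAbove _ j]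
  rw [hinner j, if_neg (lt_irrefl j), one_mul]
  conv_lhs =>
    rw [Finset.prod_congr rfl fun i (_ : i ∈ Finset.univ) => hinner (j.succAbove i)]
  rw [Finset.prod_mul_distrib, ← mul_assoc, ← Finset.prod_mul_distrib]
  congr 1
  · refine Finset.prod_congr rfl fun i _ => ?_
    rcases lt_trichotomy (j.succAbove i) j with hlt | heq | hgt
    · rw [if_pos hlt, if_neg (not_lt_of_gt hlt), if_pos hlt, one_mul]
    · exact absurd heq (Fin.succAbove_ne j i)
    · rw [if_pos hgt, if_neg (not_lt_of_gt hgt), if_neg (not_lt_of_gt hgt), mul_one]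
  · refine Finset.prod_congr rfl fun i _ => ?_
    refine Finset.prod_congr rfl fun k _ => ?_
    simp only [Fin.succAbove_lt_succAbove_iff]

lemma prod_ite_coe_lt (r : M) (j : Fin (n+1)) :
    (∏ i : Fin n, if j.succAbove i < j then r else 1) = r ^ (j : ℕ) := by
  have hcond : ∀ i : Fin n, (j.succAbove i < j) ↔ ((i : ℕ) < (j : ℕ)) := by
    intro i
    rw [Fin.succAbove_lt_iff_castSucc_lt, Fin.lt_def, Fin.coe_castSucc]
  rw [Finset.prod_congr rfl fun i _ => by rw [if_congr (hcond i) rfl rfl]]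
  have hcd : (Finset.filter (fun i : Fin n => (i : ℕ) < (j : ℕ)) Finset.univ).card = (Finset.range (j : ℕ)).card := by
    refine Finset.card_bij (fun (i : Fin n) (_ : i ∈ Finset.filter (fun i : Fin n => (i : ℕ) < (j : ℕ)) Finset.univ) => (i : ℕ)) ?_ ?_ ?_
    · intro a ha; exact Finset.mem_range.mpr (Finset.mem_filter.mp ha).2
    · intro a _ b _ hab; exact Fin.val_injective hab
    · intro a ha
      have haj : a < (j : ℕ) := Finset.mem_range.mp ha
      have han : a < n := lt_of_lt_of_le haj (Nat.lt_succ_iff.mp j.isLt)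
      exact ⟨⟨a, han⟩, Finset.mem_filter.mpr ⟨Finset.mem_univ _, haj⟩, rfl⟩
  rw [Finset.prod_ite, Finset.prod_const, Finset.prod_const_one, mul_one, hcd, Finset.card_range]

end DoubleProd

lemma map_pf {R S : Type*} [CommRing R] [CommRing S] (g : R →+* S) :
    ∀ (n : ℕ) (M : Matrix (Fin n) (Fin n) R), g (pf n M) = pf n (M.map g)
  | 0, M => by simp [pf]
  | 1, M => by simp [pf]
  | n+2, M => by
    rw [pf, pf, map_sum]
    refine Finset.sum_congr rfl fun j _ => ?_
    simp only [_root_.map_mul, _root_.map_pow, _root_.map_neg, _root_.map_one]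
    rw [map_pf g n]
    rfl

lemma schur_distinct {K : Type*} [Field K] (N : ℕ) :
    ∀ (s : Fin (2 * N) → K), (∀ i j, s i + s j ≠ 0) → Function.Injective s →
    pf (2 * N) (Matrix.of fun i j => (s i - s j) * (s i + s j)⁻¹)
      = ∏ i : Fin (2 * N), ∏ j : Fin (2 * N),
          if i < j then (s i - s j) * (s i + s j)⁻¹ else 1 := by
  induction N with
  | zero =>
    intro s _ _
    show pf 0 _ = ∏ i : Fin 0, ∏ j : Fin 0, if i < j then (s i - s j) * (s i + s j)⁻¹ else 1
    simp [pf]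
  | succ N IH =>
    intro s hsum hinj
    have h21 : Odd (2*N+1) := ⟨N, by ring⟩
    have hsub_ne : ∀ i j : Fin (2*N+2), i ≠ j → s i - s j ≠ 0 :=
      fun i j hij => sub_ne_zero_of_ne (fun h => hij (hinj h))
    show pf (2*N+2) (Matrix.of fun i j : Fin (2*N+2) => (s i - s j) * (s i + s j)⁻¹)
      = ∏ i : Fin (2*N+2), ∏ j : Fin (2*N+2),
          if i < j then (s i - s j) * (s i + s j)⁻¹ else 1
    rw [pf]
    have hterm : ∀ j : Fin (2*N+1),
        (-1 : K)^(j:ℕ) *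
          (Matrix.of fun i k : Fin (2*N+2) => (s i - s k) * (s i + s k)⁻¹) 0 j.succ *
          pf (2*N) ((((Matrix.of fun i k : Fin (2*N+2) =>
              (s i - s k) * (s i + s k)⁻¹).submatrix Fin.succ Fin.succ)).submatrix
                j.succAbove j.succAbove)
        = (-1 : K)^(j:ℕ) * ((s 0 - s j.succ) * (s 0 + s j.succ)⁻¹) *
            ∏ i : Fin (2*N), ∏ k : Fin (2*N),
              if i < k then (s (j.succAbove i).succ - s (j.succAbove k).succ) *
                (s (j.succAbove i).succ + s (j.succAbove k).succ)⁻¹ else 1 := by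
      intro j
      have hIH := IH (fun i : Fin (2*N) => s (j.succAbove i).succ)
        (fun i k => hsum _ _)
        (fun a b h => Fin.succAbove_right_injective
          (Fin.succ_injective _ (hinj h)))
      exact congrArg (fun X => (-1 : K)^(j:ℕ) *
        ((s 0 - s j.succ) * (s 0 + s j.succ)⁻¹) * X) hIH
    refine Eq.trans (Finset.sum_congr rfl fun j _ => hterm j) ?_
    refine Eq.trans ?_
      (double_prod_split_zero (n := 2*N+1)
        (fun i k => (s i - s k) * (s i + s k)⁻¹)).symm
    -- now prove the sum equals (∏ k, h 0 k.succ) * P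
    have hP : ∀ j : Fin (2*N+1),
        (∏ i : Fin (2*N+1), ∏ k : Fin (2*N+1),
            if i < k then (s i.succ - s k.succ) * (s i.succ + s k.succ)⁻¹ else 1)
          = ((-1 : K)^(j:ℕ) *
              ∏ i ∈ Finset.univ.erase j, ((s j.succ - s i.succ) * (s j.succ + s i.succ)⁻¹)) *
            ∏ i : Fin (2*N), ∏ k : Fin (2*N),
              if i < k then (s (j.succAbove i).succ - s (j.succAbove k).succ) *
                (s (j.succAbove i).succ + s (j.succAbove k).succ)⁻¹ else 1 := by
      intro j
      rw [double_prod_succAbove (n := 2*N)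
        (fun i k => (s i.succ - s k.succ) * (s i.succ + s k.succ)⁻¹) j]
      congr 1
      have hfac : ∀ i : Fin (2*N),
          (if j.succAbove i < j
            then (s (j.succAbove i).succ - s j.succ) * (s (j.succAbove i).succ + s j.succ)⁻¹
            else (s j.succ - s (j.succAbove i).succ) * (s j.succ + s (j.succAbove i).succ)⁻¹)
          = (if j.succAbove i < j then (-1 : K) else 1) *
              ((s j.succ - s (j.succAbove i).succ) * (s j.succ + s (j.succAbove i).succ)⁻¹) := by
        intro i
        by_cases hij : j.succAbove i < j
        · rw [if_pos hij, if_pos hij]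
          ring
        · rw [if_neg hij, if_neg hij, one_mul]
      rw [Finset.prod_congr rfl fun i _ => hfac i, Finset.prod_mul_distrib,
        prod_ite_coe_lt (-1 : K) j]
      exact congrArg (fun X => (-1 : K)^(j:ℕ) * X)
        (prod_succAbove_eq_prod_erase
          (fun i => (s j.succ - s i.succ) * (s j.succ + s i.succ)⁻¹) j)
    have hstep : ∀ j : Fin (2*N+1),
        (-1 : K)^(j:ℕ) * ((s 0 - s j.succ) * (s 0 + s j.succ)⁻¹) *
            (∏ i : Fin (2*N), ∏ k : Fin (2*N),
              if i < k then (s (j.succAbove i).succ - s (j.succAbove k).succ) *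
                (s (j.succAbove i).succ + s (j.succAbove k).succ)⁻¹ else 1)
        = ((s 0 - s j.succ) * (s 0 + s j.succ)⁻¹ *
              ∏ i ∈ Finset.univ.erase j, ((s j.succ + s i.succ) * (s j.succ - s i.succ)⁻¹)) *
            ∏ i : Fin (2*N+1), ∏ k : Fin (2*N+1),
              if i < k then (s i.succ - s k.succ) * (s i.succ + s k.succ)⁻¹ else 1 := by
      intro j
      rw [hP j]
      have hQR : (∏ i ∈ Finset.univ.erase j, ((s j.succ + s i.succ) * (s j.succ - s i.succ)⁻¹)) *
          (∏ i ∈ Finset.univ.erase j, ((s j.succ - s i.succ) * (s j.succ + s i.succ)⁻¹)) = 1 := by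
        rw [← Finset.prod_mul_distrib]
        refine Finset.prod_eq_one fun i hi => ?_
        have hne : j.succ ≠ i.succ := by
          intro h
          exact (Finset.mem_erase.mp hi).1 (Fin.succ_injective _ h).symm
        have h1 : s j.succ - s i.succ ≠ 0 := hsub_ne _ _ (fun h => hne h)
        have h2 : s j.succ + s i.succ ≠ 0 := hsum _ _
        field_simp
      set A := (s 0 - s j.succ) * (s 0 + s j.succ)⁻¹ with hA
      set Q := ∏ i ∈ Finset.univ.erase j, ((s j.succ - s i.succ) * (s j.succ + s i.succ)⁻¹) with hQ
      set R := ∏ i ∈ Finset.univ.erase j, ((s j.succ + s i.succ) * (s j.succ - s i.succ)⁻¹) with hR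
      set Pj := ∏ i : Fin (2*N), ∏ k : Fin (2*N),
          if i < k then (s (j.succAbove i).succ - s (j.succAbove k).succ) *
            (s (j.succAbove i).succ + s (j.succAbove k).succ)⁻¹ else 1 with hPj
      linear_combination (-((-1 : K)^(j:ℕ) * A * Pj)) * hQR
    refine Eq.trans (Finset.sum_congr rfl fun j _ => hstep j) ?_
    rw [← Finset.sum_mul]
    congr 1
    exact star_identity h21 (fun i => s i.succ) (s 0)
      (fun i k => hsum _ _) (fun i => hsum _ _)
      (fun a b h => Fin.succ_injective _ (hinj h))

lemma lift_injective_of_injective {R P : Type*} [CommRing R] [CommRing P] {M : Submonoid R}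
    {S : Type*} [CommRing S] [Algebra R S] [IsLocalization M S] {g : R →+* P}
    (hg : ∀ y : M, IsUnit (g y)) (hinj : Function.Injective g) :
    Function.Injective (IsLocalization.lift (S := S) hg) := by
  intro u w huw
  obtain ⟨⟨a, y⟩, rfl⟩ := IsLocalization.mk'_surjective M u
  obtain ⟨⟨b, z⟩, rfl⟩ := IsLocalization.mk'_surjective M w
  have h1 := (IsLocalization.lift_mk'_spec (S := S) (g := g) hg a
    (IsLocalization.lift (S := S) hg (IsLocalization.mk' S b z)) y).mp huw
  have h2' := (IsLocalization.lift_mk'_spec (S := S) (g := g) hg b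
    (IsLocalization.lift (S := S) hg (IsLocalization.mk' S b z)) z).mp rfl
  rw [IsLocalization.mk'_eq_iff_eq]
  apply congrArg (algebraMap R S)
  apply hinj
  rw [_root_.map_mul, _root_.map_mul, h1, h2']
  ring

set_option maxHeartbeats 2000000 in
set_option synthInstance.maxHeartbeats 400000 in
lemma schur_pfaffian_even_aux {K : Type*} [Field K] (N : ℕ)
    (s : Fin (2 * N) → K) (hs : ∀ i j, s i + s j ≠ 0) :
    pf (2 * N) (Matrix.of fun i j => (s i - s j) / (s i + s j))
      = ∏ i : Fin (2 * N), ∏ j : Fin (2 * N),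
          if i < j then (s i - s j) / (s i + s j) else 1 := by
  rcases Nat.eq_zero_or_pos N with rfl | hN
  · show pf 0 (Matrix.of fun i j : Fin 0 => (s i - s j) / (s i + s j))
      = ∏ i : Fin 0, ∏ j : Fin 0, if i < j then (s i - s j) / (s i + s j) else 1
    simp [pf]
  · classical
    have h2 : (2 : K) ≠ 0 := by
      intro h
      have h0 : (0 : ℕ) < 2 * N := by omega
      exact hs ⟨0, h0⟩ ⟨0, h0⟩ (by rw [← two_mul, h, zero_mul])
    simp only [div_eq_mul_inv]
    have hXadd : ∀ i j : Fin (2*N),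
        (MvPolynomial.X i + MvPolynomial.X j : MvPolynomial (Fin (2*N)) K) ≠ 0 := by
      intro i j h
      have h' := congrArg (MvPolynomial.eval (fun k => if k = i then (1:K) else 0)) h
      simp only [_root_.map_add, MvPolynomial.eval_X, _root_.map_zero, if_true] at h'
      by_cases hji : j = i
      · rw [if_pos hji] at h'; exact h2 (by linear_combination h')
      · rw [if_neg hji] at h'; exact one_ne_zero (by linear_combination h')
    have hXinj : Function.Injective
        (fun i : Fin (2*N) => (MvPolynomial.X i : MvPolynomial (Fin (2*N)) K)) :=
      fun i j h => MvPolynomial.X_injective h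
    set d : MvPolynomial (Fin (2*N)) K :=
      ∏ i, ∏ j, (MvPolynomial.X i + MvPolynomial.X j) with hd
    have hd0 : d ≠ 0 := Finset.prod_ne_zero_iff.mpr fun i _ =>
      Finset.prod_ne_zero_iff.mpr fun j _ => hXadd i j
    have hdvd : ∀ i j : Fin (2*N), (MvPolynomial.X i + MvPolynomial.X j) ∣ d := fun i j =>
      dvd_trans
        (Finset.dvd_prod_of_mem (fun k => MvPolynomial.X i + MvPolynomial.X k)
          (Finset.mem_univ j))
        (Finset.dvd_prod_of_mem (fun k => ∏ l, (MvPolynomial.X k + MvPolynomial.X l))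
          (Finset.mem_univ i))
    set α : MvPolynomial (Fin (2*N)) K →+* Localization.Away d :=
      algebraMap (MvPolynomial (Fin (2*N)) K) (Localization.Away d) with hα
    have hu : ∀ i j : Fin (2*N), IsUnit (α (MvPolynomial.X i + MvPolynomial.X j)) :=
      fun i j => IsLocalization.Away.isUnit_of_dvd (x := d) (hdvd i j)
    set e : Fin (2*N) → Fin (2*N) → Localization.Away d := fun i j =>
      α (MvPolynomial.X i - MvPolynomial.X j) *
        Ring.inverse (α (MvPolynomial.X i + MvPolynomial.X j)) with he
    -- the fraction field
    have halg_inj : Function.Injective (algebraMap (MvPolynomial (Fin (2*N)) K)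
        (FractionRing (MvPolynomial (Fin (2*N)) K))) := IsFractionRing.injective _ _
    have hβu : ∀ y : (Submonoid.powers d),
        IsUnit ((algebraMap (MvPolynomial (Fin (2*N)) K)
          (FractionRing (MvPolynomial (Fin (2*N)) K))) (y : MvPolynomial (Fin (2*N)) K)) := by
      rintro ⟨y, k, rfl⟩
      refine isUnit_iff_ne_zero.mpr fun hzero => pow_ne_zero k hd0 (halg_inj ?_)
      rw [hzero, _root_.map_zero]
    set β : Localization.Away d →+* FractionRing (MvPolynomial (Fin (2*N)) K) :=
      IsLocalization.lift hβu with hβ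
    have hβα : ∀ a, β (α a) = algebraMap _ _ a := fun a => IsLocalization.lift_eq hβu a
    have hβinj : Function.Injective β :=
      lift_injective_of_injective hβu halg_inj
    -- the variables in the fraction field
    set t : Fin (2*N) → FractionRing (MvPolynomial (Fin (2*N)) K) := fun i =>
      algebraMap _ _ (MvPolynomial.X i : MvPolynomial (Fin (2*N)) K) with ht
    have htsum : ∀ i j, t i + t j ≠ 0 := by
      intro i j h
      exact hXadd i j (halg_inj (by rw [_root_.map_add, _root_.map_zero]; exact h))
    have htinj : Function.Injective t := fun i j h => hXinj (halg_inj h)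
    have hβe : ∀ i j, β (e i j) = (t i - t j) * (t i + t j)⁻¹ := by
      intro i j
      have hinv : β (Ring.inverse (α (MvPolynomial.X i + MvPolynomial.X j)))
          = (t i + t j)⁻¹ := by
        have h1 : β (Ring.inverse (α (MvPolynomial.X i + MvPolynomial.X j)) *
            α (MvPolynomial.X i + MvPolynomial.X j)) = 1 := by
          rw [Ring.inverse_mul_cancel _ (hu i j), _root_.map_one]
        rw [_root_.map_mul, hβα] at h1
        have h3 : t i + t j = algebraMap (MvPolynomial (Fin (2*N)) K)
            (FractionRing (MvPolynomial (Fin (2*N)) K))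
            (MvPolynomial.X i + MvPolynomial.X j) := by
          rw [_root_.map_add]
        rw [h3]
        exact eq_inv_of_mul_eq_one_left h1
      simp only [he]
      rw [_root_.map_mul, hβα, _root_.map_sub, hinv]
    -- the identity in the localization
    have hB : pf (2*N) (Matrix.of fun i j => e i j)
        = ∏ i : Fin (2*N), ∏ j : Fin (2*N), if i < j then e i j else 1 := by
      apply hβinj
      rw [map_pf β, map_prod]
      have hmap : (Matrix.of fun i j => e i j).map β
          = Matrix.of fun i j => (t i - t j) * (t i + t j)⁻¹ := by
        ext i j
        exact hβe i j
      rw [hmap]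
      have hrhs : ∀ i : Fin (2*N), β (∏ j, if i < j then e i j else 1)
          = ∏ j, if i < j then (t i - t j) * (t i + t j)⁻¹ else 1 := by
        intro i
        rw [map_prod]
        refine Finset.prod_congr rfl fun j _ => ?_
        rw [apply_ite β, _root_.map_one, hβe i j]
      rw [Finset.prod_congr rfl fun i _ => hrhs i]
      exact schur_distinct N t htsum htinj
    -- specialize via evaluation at s
    have hγu : ∀ y : (Submonoid.powers d),
        IsUnit ((MvPolynomial.eval s : MvPolynomial (Fin (2*N)) K →+* K)
          (y : MvPolynomial (Fin (2*N)) K)) := by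
      rintro ⟨y, k, rfl⟩
      rw [_root_.map_pow]
      refine (IsUnit.pow k) (isUnit_iff_ne_zero.mpr ?_)
      rw [hd]
      rw [map_prod]
      refine Finset.prod_ne_zero_iff.mpr fun i _ => ?_
      rw [map_prod]
      refine Finset.prod_ne_zero_iff.mpr fun j _ => ?_
      simpa using hs i j
    set γ : Localization.Away d →+* K := IsLocalization.lift hγu with hγ
    have hγα : ∀ a, γ (α a) = MvPolynomial.eval s a := fun a => IsLocalization.lift_eq hγu a
    have hγe : ∀ i j, γ (e i j) = (s i - s j) * (s i + s j)⁻¹ := by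
      intro i j
      have hinv : γ (Ring.inverse (α (MvPolynomial.X i + MvPolynomial.X j)))
          = (s i + s j)⁻¹ := by
        have h1 : γ (Ring.inverse (α (MvPolynomial.X i + MvPolynomial.X j)) *
            α (MvPolynomial.X i + MvPolynomial.X j)) = 1 := by
          rw [Ring.inverse_mul_cancel _ (hu i j), _root_.map_one]
        rw [_root_.map_mul, hγα] at h1
        have h3 : (MvPolynomial.eval s) (MvPolynomial.X i + MvPolynomial.X j)
            = s i + s j := by simp
        rw [h3] at h1
        exact eq_inv_of_mul_eq_one_left h1
      simp only [he]
      rw [_root_.map_mul, hγα, hinv]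
      have h4 : (MvPolynomial.eval s) (MvPolynomial.X i - MvPolynomial.X j)
          = s i - s j := by simp
      rw [h4]
    -- conclude
    have hfinal := congrArg γ hB
    rw [map_pf γ, map_prod] at hfinal
    have hmap : (Matrix.of fun i j => e i j).map γ
        = Matrix.of fun i j => (s i - s j) * (s i + s j)⁻¹ := by
      ext i j
      exact hγe i j
    rw [hmap] at hfinal
    have hrhs : ∀ i : Fin (2*N), γ (∏ j, if i < j then e i j else 1)
        = ∏ j, if i < j then (s i - s j) * (s i + s j)⁻¹ else 1 := by
      intro i
      rw [map_prod]
      refine Finset.prod_congr rfl fun j _ => ?_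
      rw [apply_ite γ, _root_.map_one, hγe i j]
    rw [Finset.prod_congr rfl fun i _ => hrhs i] at hfinal
    exact hfinal

/-- Schur's Pfaffian identity, even case: the Pfaffian of the
skew-symmetric matrix with entries `(sᵢ - sⱼ)/(sᵢ + sⱼ)` equals
`∏_{i<j} (sᵢ - sⱼ)/(sᵢ + sⱼ)`. -/
theorem schur_pfaffian_even {K : Type*} [Field K] (N : ℕ)
    (s : Fin (2 * N) → K) (hs : ∀ i j, s i + s j ≠ 0) :
    pf (2 * N) (Matrix.of fun i j => (s i - s j) / (s i + s j))
      = ∏ i : Fin (2 * N), ∏ j : Fin (2 * N),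
          if i < j then (s i - s j) / (s i + s j) else 1 :=
  schur_pfaffian_even_aux N s hs
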